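/- Decoupled form of the first doubling step: let U₀, Q₀ and Y₀ ∈ ℝ^{r×r}, Z₀ ∈ ℝ^{r×r}, S₀, T₀, γ be such that I - Y₀Z₀, I - Z₀Y₀ and L := I - Y₀Z₀ - γ²T₀(I - Z₀Y₀)⁻¹S₀ are invertible. Then the 2×2 block matrix (I - Y₁Z₁) with Y₁ = [[0, Y₀],[Y₀, γT₀]] and Z₁ = [[0, Z₀],[Z₀, γS₀]] is invertible, and its inverse equals [[I, γ(I-Y₀Z₀)⁻¹Y₀S₀],[0, I]] · diag((I-Y₀Z₀)⁻¹, L⁻¹) · [[I, 0],[γT₀(I-Z₀Y₀)⁻¹Z₀, I]]. -/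

import Mathlib

open Matrix

theorem stmt13 {r : ℕ} (Y₀ Z₀ S₀ T₀ : Matrix (Fin r) (Fin r) ℝ) (γ : ℝ)
    (h1 : IsUnit (1 - Y₀ * Z₀)) (h2 : IsUnit (1 - Z₀ * Y₀))
    (L : Matrix (Fin r) (Fin r) ℝ)
    (hL : L = 1 - Y₀ * Z₀ - (γ ^ 2) • (T₀ * (1 - Z₀ * Y₀)⁻¹ * S₀))
    (hLu : IsUnit L)
    (Y₁ Z₁ : Matrix (Fin r ⊕ Fin r) (Fin r ⊕ Fin r) ℝ)
    (hY₁ : Y₁ = Matrix.fromBlocks 0 Y₀ Y₀ (γ • T₀))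
    (hZ₁ : Z₁ = Matrix.fromBlocks 0 Z₀ Z₀ (γ • S₀)) :
    IsUnit (1 - Y₁ * Z₁) ∧
    (1 - Y₁ * Z₁)⁻¹ =
      Matrix.fromBlocks 1 (γ • ((1 - Y₀ * Z₀)⁻¹ * Y₀ * S₀)) 0 1 *
        Matrix.fromBlocks ((1 - Y₀ * Z₀)⁻¹) 0 0 L⁻¹ *
        Matrix.fromBlocks 1 0 (γ • (T₀ * (1 - Z₀ * Y₀)⁻¹ * Z₀)) 1 := by
  have hA1 : (1 - Y₀ * Z₀) * (1 - Y₀ * Z₀)⁻¹ = 1 :=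
    Matrix.mul_nonsing_inv _ ((Matrix.isUnit_iff_isUnit_det _).mp h1)
  have hA1' : (1 - Y₀ * Z₀)⁻¹ * (1 - Y₀ * Z₀) = 1 :=
    Matrix.nonsing_inv_mul _ ((Matrix.isUnit_iff_isUnit_det _).mp h1)
  have hC1' : (1 - Z₀ * Y₀)⁻¹ * (1 - Z₀ * Y₀) = 1 :=
    Matrix.nonsing_inv_mul _ ((Matrix.isUnit_iff_isUnit_det _).mp h2)
  have hL1 : L * L⁻¹ = 1 :=
    Matrix.mul_nonsing_inv _ ((Matrix.isUnit_iff_isUnit_det _).mp hLu)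
  have hpush : Z₀ * (1 - Y₀ * Z₀)⁻¹ = (1 - Z₀ * Y₀)⁻¹ * Z₀ := by
    have h0 : (1 - Z₀ * Y₀) * (Z₀ * (1 - Y₀ * Z₀)⁻¹) = Z₀ := by
      have e : (1 - Z₀ * Y₀) * Z₀ = Z₀ * (1 - Y₀ * Z₀) := by noncomm_ring
      rw [← Matrix.mul_assoc, e, Matrix.mul_assoc, hA1, Matrix.mul_one]
    calc Z₀ * (1 - Y₀ * Z₀)⁻¹
        = ((1 - Z₀ * Y₀)⁻¹ * (1 - Z₀ * Y₀)) * (Z₀ * (1 - Y₀ * Z₀)⁻¹) := by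
          rw [hC1', Matrix.one_mul]
      _ = (1 - Z₀ * Y₀)⁻¹ * Z₀ := by rw [Matrix.mul_assoc, h0]
  have hA1r : ∀ X : Matrix (Fin r) (Fin r) ℝ,
      (1 - Y₀ * Z₀) * ((1 - Y₀ * Z₀)⁻¹ * X) = X := fun X => by
    rw [← Matrix.mul_assoc, hA1, Matrix.one_mul]
  have hZAY : ∀ X : Matrix (Fin r) (Fin r) ℝ,
      Z₀ * ((1 - Y₀ * Z₀)⁻¹ * (Y₀ * X)) = (1 - Z₀ * Y₀)⁻¹ * X - X := fun X => by
    have e : Z₀ * ((1 - Y₀ * Z₀)⁻¹ * (Y₀ * X)) =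
        (1 - Z₀ * Y₀)⁻¹ * ((1 - (1 - Z₀ * Y₀)) * X) := by
      rw [← Matrix.mul_assoc, hpush, Matrix.mul_assoc]; congr 1; noncomm_ring
    rw [e, Matrix.sub_mul, Matrix.one_mul, Matrix.mul_sub, ← Matrix.mul_assoc, hC1',
      Matrix.one_mul]
  have hLL : ∀ X : Matrix (Fin r) (Fin r) ℝ, L * (L⁻¹ * X) = X := fun X => by
    rw [← Matrix.mul_assoc, hL1, Matrix.one_mul]
  have hAexp1 : (1 - Y₀ * Z₀)⁻¹ - Y₀ * (Z₀ * (1 - Y₀ * Z₀)⁻¹) = 1 := by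
    have h := hA1
    simp only [Matrix.sub_mul, Matrix.one_mul, Matrix.mul_assoc] at h
    exact h
  have hLexp : ∀ X : Matrix (Fin r) (Fin r) ℝ,
      L⁻¹ * X - Y₀ * (Z₀ * (L⁻¹ * X)) -
        γ ^ 2 • (T₀ * ((1 - Z₀ * Y₀)⁻¹ * (S₀ * (L⁻¹ * X)))) = X := fun X => by
    have h := hLL X
    nth_rewrite 1 [hL] at h
    simp only [Matrix.sub_mul, Matrix.one_mul, Matrix.smul_mul, Matrix.mul_assoc] at h
    exact h
  have hLexp1 : L⁻¹ - Y₀ * (Z₀ * L⁻¹) -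
      γ ^ 2 • (T₀ * ((1 - Z₀ * Y₀)⁻¹ * (S₀ * L⁻¹))) = 1 := by
    have h := hL1
    nth_rewrite 1 [hL] at h
    simp only [Matrix.sub_mul, Matrix.one_mul, Matrix.smul_mul, Matrix.mul_assoc] at h
    exact h
  have hM : 1 - Y₁ * Z₁ =
      Matrix.fromBlocks (1 - Y₀ * Z₀) (-(γ • (Y₀ * S₀))) (-(γ • (T₀ * Z₀)))
        (1 - Y₀ * Z₀ - (γ * γ) • (T₀ * S₀)) := by
    rw [hY₁, hZ₁, Matrix.fromBlocks_multiply, ← Matrix.fromBlocks_one]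
    simp [sub_eq_add_neg, Matrix.fromBlocks_add, Matrix.fromBlocks_neg, smul_smul,
      Matrix.smul_mul, Matrix.mul_smul, add_comm, add_left_comm, add_assoc]
    rw [show (1 : Matrix (Fin r ⊕ Fin r) (Fin r ⊕ Fin r) ℝ) = Matrix.fromBlocks 1 0 0 1 from
      Matrix.fromBlocks_one.symm, Matrix.fromBlocks_add]
    exact Matrix.fromBlocks_inj.mpr ⟨by abel, by abel, by abel, by abel⟩
  have key : (1 - Y₁ * Z₁) *
      (Matrix.fromBlocks 1 (γ • ((1 - Y₀ * Z₀)⁻¹ * Y₀ * S₀)) 0 1 *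
        Matrix.fromBlocks ((1 - Y₀ * Z₀)⁻¹) 0 0 L⁻¹ *
        Matrix.fromBlocks 1 0 (γ • (T₀ * (1 - Z₀ * Y₀)⁻¹ * Z₀)) 1) = 1 := by
    rw [hM, Matrix.fromBlocks_multiply, Matrix.fromBlocks_multiply,
      Matrix.fromBlocks_multiply, ← Matrix.fromBlocks_one]
    refine Matrix.fromBlocks_inj.mpr ⟨?_, ?_, ?_, ?_⟩
    · simp only [Matrix.one_mul, Matrix.mul_one, Matrix.zero_mul, Matrix.mul_zero, add_zero,
        zero_add, Matrix.smul_mul, Matrix.mul_smul, smul_smul, Matrix.neg_mul, Matrix.mul_neg,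
        Matrix.mul_add, Matrix.add_mul, Matrix.sub_mul, Matrix.mul_sub, Matrix.mul_assoc,
        hA1r, hZAY, hLL]
      linear_combination (norm := module) hAexp1
    · simp only [Matrix.one_mul, Matrix.mul_one, Matrix.zero_mul, Matrix.mul_zero, add_zero,
        zero_add, Matrix.smul_mul, Matrix.mul_smul, smul_smul, Matrix.neg_mul, Matrix.mul_neg,
        Matrix.mul_add, Matrix.add_mul, Matrix.sub_mul, Matrix.mul_sub, Matrix.mul_assoc,
        hA1r, hZAY, hLL, hpush]
      module
    · simp only [Matrix.one_mul, Matrix.mul_one, Matrix.zero_mul, Matrix.mul_zero, add_zero,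
        zero_add, Matrix.smul_mul, Matrix.mul_smul, smul_smul, Matrix.neg_mul, Matrix.mul_neg,
        Matrix.mul_add, Matrix.add_mul, Matrix.sub_mul, Matrix.mul_sub, Matrix.mul_assoc,
        hA1r, hZAY, hLL, hpush]
      linear_combination (norm := module) γ • hLexp (T₀ * ((1 - Z₀ * Y₀)⁻¹ * Z₀))
    · simp only [Matrix.one_mul, Matrix.mul_one, Matrix.zero_mul, Matrix.mul_zero, add_zero,
        zero_add, Matrix.smul_mul, Matrix.mul_smul, smul_smul, Matrix.neg_mul, Matrix.mul_neg,
        Matrix.mul_add, Matrix.add_mul, Matrix.sub_mul, Matrix.mul_sub, Matrix.mul_assoc,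
        hA1r, hZAY, hLL, hpush]
      linear_combination (norm := module) hLexp1
  exact ⟨(Matrix.isUnit_iff_isUnit_det _).mpr (IsUnit.of_mul_eq_one _
      (by simpa using congrArg Matrix.det key)),
    Matrix.inv_eq_right_inv key⟩
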